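/- arXiv:2008.03489 — 2 statements merged into one kernel-verified Lean document; each statement's English description precedes it below -/
import Mathlib

section
/- Let F, G, 𝔽, 𝔾, H_grd be the first five components of an interpolant lifting base and let 𝔽𝔾 = 𝔽 ∪ 𝔾. Let {t₁,…,tₙ} be the set of the 𝔽𝔾-terms with an 𝔽𝔾-terms-maximal occurrence in H_grd, ordered such that if tᵢ is a strict subterm of tⱼ then i < j. Let v₁,…,vₙ be fresh variables, let σ be the injective substitution {vᵢ ↦ tᵢ | 1 ≤ i ≤ n}, and for each i let Qᵢ = ∃ if tᵢ is an 𝔽-term and Qᵢ = ∀ if tᵢ is a 𝔾-term. Then Q₁v₁ … Qₙvₙ H_grd⁻σ is a Craig-Lyndon interpolant of F and G. -/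
open Classical

namespace CTIF

/-- First-order terms: variables and applications of function symbols
(a function symbol is a natural number used with an arity). -/
inductive Tm : Type where
  | var : ℕ → Tm
  | app : ℕ → (n : ℕ) → (Fin n → Tm) → Tm

/-- First-order formulas without equality. -/
inductive Fml : Type where
  | tru : Fml
  | fls : Fml
  | atom : ℕ → (n : ℕ) → (Fin n → Tm) → Fml
  | neg : Fml → Fml
  | conj : Fml → Fml → Fml
  | disj : Fml → Fml → Fml
  | all : ℕ → Fml → Fml
  | exi : ℕ → Fml → Fml

/-- A structure: interpretation of all function and predicate symbols (at every arity). -/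
structure Struc (D : Type) : Type where
  fn : ℕ → (n : ℕ) → (Fin n → D) → D
  pr : ℕ → (n : ℕ) → (Fin n → D) → Prop

def Tm.eval {D : Type} (M : Struc D) (a : ℕ → D) : Tm → D
  | .var x => a x
  | .app f n ts => M.fn f n (fun i => (ts i).eval M a)

def Fml.sat {D : Type} : Fml → Struc D → (ℕ → D) → Prop
  | .tru, _, _ => True
  | .fls, _, _ => False
  | .atom p n ts, M, a => M.pr p n (fun i => (ts i).eval M a)
  | .neg F, M, a => ¬ F.sat M a
  | .conj F G, M, a => F.sat M a ∧ G.sat M a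
  | .disj F G, M, a => F.sat M a ∨ G.sat M a
  | .all x F, M, a => ∀ d, F.sat M (Function.update a x d)
  | .exi x F, M, a => ∃ d, F.sat M (Function.update a x d)

/-- Entailment: every model (with any variable assignment) of `F` satisfies `G`. -/
def entails (F G : Fml) : Prop :=
  ∀ (D : Type), Nonempty D → ∀ (M : Struc D) (a : ℕ → D), F.sat M a → G.sat M a

def Tm.vars : Tm → Set ℕ
  | .var x => {x}
  | .app _ _ ts => ⋃ i, (ts i).vars

/-- Function symbols (with their arity) occurring in a term. -/
def Tm.funs : Tm → Set (ℕ × ℕ)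
  | .var _ => ∅
  | .app f n ts => insert (f, n) (⋃ i, (ts i).funs)

def Tm.isGround (t : Tm) : Prop := t.vars = ∅

/-- `t` is a ground term all of whose function symbols come from `S`. -/
def Tm.builtFrom (S : Set (ℕ × ℕ)) : Tm → Prop
  | .var _ => False
  | .app f n ts => (f, n) ∈ S ∧ ∀ i, Tm.builtFrom S (ts i)

/-- `t` occurs (as a subterm) in the given term. -/
def Tm.occursIn (t : Tm) : Tm → Prop
  | .var x => t = Tm.var x
  | .app f n ts => t = Tm.app f n ts ∨ ∃ i, Tm.occursIn t (ts i)

/-- `s` is a strict subterm of `t`. -/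
def Tm.strictSub (s t : Tm) : Prop := s ≠ t ∧ s.occursIn t

def Fml.funs : Fml → Set (ℕ × ℕ)
  | .tru => ∅
  | .fls => ∅
  | .atom _ _ ts => ⋃ i, (ts i).funs
  | .neg F => F.funs
  | .conj F G => F.funs ∪ G.funs
  | .disj F G => F.funs ∪ G.funs
  | .all _ F => F.funs
  | .exi _ F => F.funs

/-- Predicate symbols with the polarity (`true` = positive) of their occurrences;
the second argument is the polarity of the context. -/
def Fml.preds : Fml → Bool → Set (ℕ × Bool)
  | .tru, _ => ∅
  | .fls, _ => ∅
  | .atom p _ _, pol => {(p, pol)}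
  | .neg F, pol => F.preds (!pol)
  | .conj F G, pol => F.preds pol ∪ G.preds pol
  | .disj F G, pol => F.preds pol ∪ G.preds pol
  | .all _ F, pol => F.preds pol
  | .exi _ F, pol => F.preds pol

/-- pred(F): predicates paired with the polarities of their occurrences in `F`. -/
def Fml.pred (F : Fml) : Set (ℕ × Bool) := F.preds true

/-- Predicate symbols occurring in a formula (disregarding polarity). -/
def Fml.predSyms : Fml → Set ℕ
  | .tru => ∅
  | .fls => ∅
  | .atom p _ _ => {p}
  | .neg F => F.predSyms
  | .conj F G => F.predSyms ∪ G.predSyms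
  | .disj F G => F.predSyms ∪ G.predSyms
  | .all _ F => F.predSyms
  | .exi _ F => F.predSyms

def Fml.free : Fml → Set ℕ
  | .tru => ∅
  | .fls => ∅
  | .atom _ _ ts => ⋃ i, (ts i).vars
  | .neg F => F.free
  | .conj F G => F.free ∪ G.free
  | .disj F G => F.free ∪ G.free
  | .all x F => F.free \ {x}
  | .exi x F => F.free \ {x}

/-- Variables occurring bound (i.e. quantified upon) in a formula. -/
def Fml.bound : Fml → Set ℕ
  | .tru => ∅
  | .fls => ∅
  | .atom _ _ _ => ∅
  | .neg F => F.bound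
  | .conj F G => F.bound ∪ G.bound
  | .disj F G => F.bound ∪ G.bound
  | .all x F => insert x F.bound
  | .exi x F => insert x F.bound

def Fml.isQF : Fml → Prop
  | .tru => True
  | .fls => True
  | .atom _ _ _ => True
  | .neg F => F.isQF
  | .conj F G => F.isQF ∧ G.isQF
  | .disj F G => F.isQF ∧ G.isQF
  | .all _ _ => False
  | .exi _ _ => False

def Fml.isGround (F : Fml) : Prop := F.isQF ∧ F.free = ∅

def Fml.isSentence (F : Fml) : Prop := F.free = ∅

/-- Substitutions: mappings from variables to terms. -/
abbrev Subst := ℕ → Tm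

def Subst.dom (σ : Subst) : Set ℕ := {x | σ x ≠ Tm.var x}

def Subst.rng (σ : Subst) : Set Tm := {t | ∃ x ∈ σ.dom, σ x = t}

def Subst.isGround (σ : Subst) : Prop := ∀ x ∈ σ.dom, (σ x).isGround

/-- Injective substitution: distinct domain variables are mapped to distinct terms. -/
def Subst.inj (σ : Subst) : Prop := ∀ x ∈ σ.dom, ∀ y ∈ σ.dom, σ x = σ y → x = y

def Tm.subst (σ : Subst) : Tm → Tm
  | .var x => σ x
  | .app f n ts => .app f n (fun i => (ts i).subst σ)

/-- Substitution application to formulas (free occurrences of variables are replaced). -/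
def Fml.subst (σ : Subst) : Fml → Fml
  | .tru => .tru
  | .fls => .fls
  | .atom p n ts => .atom p n (fun i => (ts i).subst σ)
  | .neg F => .neg (F.subst σ)
  | .conj F G => .conj (F.subst σ) (G.subst σ)
  | .disj F G => .disj (F.subst σ) (G.subst σ)
  | .all x F => .all x (F.subst (Function.update σ x (Tm.var x)))
  | .exi x F => .exi x (F.subst (Function.update σ x (Tm.var x)))

/-- Inverse application of an injective substitution to a term:
all rng(σ)-maximal occurrences of terms in the range of σ are replaced by
the corresponding domain variable. -/
noncomputable def Tm.inv (σ : Subst) : Tm → Tm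
  | .var x =>
      if h : ∃ v ∈ Subst.dom σ, σ v = Tm.var x then Tm.var h.choose else Tm.var x
  | .app f n ts =>
      if h : ∃ v ∈ Subst.dom σ, σ v = Tm.app f n ts then Tm.var h.choose
      else .app f n (fun i => Tm.inv σ (ts i))

/-- Inverse application of an injective substitution to a formula. -/
noncomputable def Fml.inv (σ : Subst) : Fml → Fml
  | .tru => .tru
  | .fls => .fls
  | .atom p n ts => .atom p n (fun i => Tm.inv σ (ts i))
  | .neg F => .neg (F.inv σ)
  | .conj F G => .conj (F.inv σ) (G.inv σ)
  | .disj F G => .disj (F.inv σ) (G.inv σ)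
  | .all x F => .all x (F.inv σ)
  | .exi x F => .exi x (F.inv σ)

/-- `H` is a Craig-Lyndon interpolant of `F` and `G`. -/
def CLInterp (F G H : Fml) : Prop :=
  entails F H ∧ entails H G ∧
  H.pred ⊆ F.pred ∩ G.pred ∧
  H.funs ⊆ F.funs ∩ G.funs ∧
  H.free ⊆ F.free ∩ G.free

/-- `H` is a Craig interpolant of `F` and `G` (no polarity constraint). -/
def CraigInterp (F G H : Fml) : Prop :=
  entails F H ∧ entails H G ∧
  H.predSyms ⊆ F.predSyms ∩ G.predSyms ∧
  H.funs ⊆ F.funs ∩ G.funs ∧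
  H.free ⊆ F.free ∩ G.free

/-- An S-term: a term whose outermost function symbol is in `S`. -/
def isSTerm (S : Set (ℕ × ℕ)) : Tm → Prop
  | .var _ => False
  | .app f n _ => (f, n) ∈ S

def STerms (S : Set (ℕ × ℕ)) : Set Tm := {t | isSTerm S t}

/-- `t` has a `T`-maximal occurrence in the given term: an occurrence that is
not within an occurrence of another member of `T`. -/
def Tm.hasMaxOcc (T : Set Tm) (t : Tm) : Tm → Prop
  | .var x => Tm.var x ∈ T ∧ t = Tm.var x
  | .app f n ts =>
      (Tm.app f n ts ∈ T ∧ t = Tm.app f n ts) ∨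
      (Tm.app f n ts ∉ T ∧ ∃ i, Tm.hasMaxOcc T t (ts i))

/-- `t` has a `T`-maximal occurrence in the formula. -/
def Fml.hasMaxOcc (T : Set Tm) (t : Tm) : Fml → Prop
  | .tru => False
  | .fls => False
  | .atom _ _ ts => ∃ i, Tm.hasMaxOcc T t (ts i)
  | .neg F => F.hasMaxOcc T t
  | .conj F G => F.hasMaxOcc T t ∨ G.hasMaxOcc T t
  | .disj F G => F.hasMaxOcc T t ∨ G.hasMaxOcc T t
  | .all _ F => F.hasMaxOcc T t
  | .exi _ F => F.hasMaxOcc T t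

/-- Universal quantification over a list of variables. -/
def alls (xs : List ℕ) (F : Fml) : Fml := xs.foldr Fml.all F

end CTIF
namespace CTIF

/-- `M'` agrees with `M` except possibly in the interpretation of the function
symbols (with arity) in `S`. -/
def agreeExcept {D : Type} (M M' : Struc D) (S : Set (ℕ × ℕ)) : Prop :=
  M'.pr = M.pr ∧ ∀ g n, (g, n) ∉ S → M'.fn g n = M.fn g n

/-- Interpolant lifting base ⟨F, G, 𝔽, 𝔾, H_grd, F_exp, G_exp, θ⟩
(Definition of "interpolant lifting base"). -/
def IsLiftBase (F G : Fml) (FS GS : Set (ℕ × ℕ)) (Hg Fe Ge : Fml) (θ : Subst) : Prop :=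
  F.isSentence ∧ G.isSentence ∧
  FS ∩ GS = ∅ ∧
  Hg.isGround ∧ Fe.isQF ∧ Ge.isQF ∧ Subst.isGround θ ∧
  -- (i)  F ⊨ ∃𝔽 ∀u F_exp, semantically via expansions:
  (∀ (D : Type), Nonempty D → ∀ M : Struc D, (∀ a, F.sat M a) →
    ∃ M' : Struc D, agreeExcept M M' FS ∧ ∀ a, Fe.sat M' a) ∧
  -- (i') ∀𝔾 ∃v G_exp ⊨ G, semantically via reinterpretations:
  (∀ (D : Type), Nonempty D → ∀ M : Struc D,
    (∀ M' : Struc D, agreeExcept M M' GS → ∃ a, Ge.sat M' a) → ∀ a, G.sat M a) ∧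
  -- (ii), (ii')
  Fe.pred ⊆ F.pred ∧ Ge.pred ⊆ G.pred ∧
  -- (iii), (iii')
  Fe.funs ⊆ (F.funs ∩ G.funs) ∪ FS ∧ Ge.funs ⊆ (F.funs ∩ G.funs) ∪ GS ∧
  -- (iv), (iv')
  F.funs ∩ GS = ∅ ∧ G.funs ∩ FS = ∅ ∧
  -- (v)
  Subst.dom θ = Fe.free ∪ Ge.free ∧
  -- (vi)
  (∃ c₀ : ℕ, (c₀, 0) ∈ FS ∪ GS ∧
    ∀ x ∈ Subst.dom θ, (θ x).funs ⊆ Fe.funs ∪ Ge.funs ∪ {(c₀, 0)}) ∧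
  -- (vii)
  CLInterp (Fe.subst θ) (Ge.subst θ) Hg

/-- The lifted formula Q₁v₁ … Qₙvₙ body, where Qᵢ = ∃ if tᵢ is an 𝔽-term
(its outermost symbol is in `FS`) and Qᵢ = ∀ otherwise. -/
noncomputable def lifted (n : ℕ) (v : Fin n → ℕ) (tl : Fin n → Tm)
    (FS : Set (ℕ × ℕ)) (body : Fml) : Fml :=
  (List.finRange n).foldr
    (fun i acc => if isSTerm FS (tl i) then Fml.exi (v i) acc else Fml.all (v i) acc)
    body

end CTIF
namespace CTIF
-- ===== Auxiliary lemmas =====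

theorem Tm.eval_congr {D : Type} (M : Struc D) :
    ∀ (t : Tm) (a b : ℕ → D), (∀ x ∈ t.vars, a x = b x) → t.eval M a = t.eval M b
  | .var x, a, b, h => h x (by simp [Tm.vars])
  | .app f m ts, a, b, h => by
      simp only [Tm.eval]
      congr 1
      funext i
      exact Tm.eval_congr M (ts i) a b
        (fun x hx => h x (by simp only [Tm.vars, Set.mem_iUnion]; exact ⟨i, hx⟩))

theorem Tm.eval_ground {D : Type} (M : Struc D) (t : Tm) (ht : t.vars = ∅)
    (a b : ℕ → D) : t.eval M a = t.eval M b :=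
  Tm.eval_congr M t a b (fun x hx => absurd (ht ▸ hx) (Set.notMem_empty x))

theorem Tm.vars_app_empty {f m ts} (h : Tm.vars (.app f m ts) = ∅) (i : Fin m) :
    (ts i).vars = ∅ := by
  have := Set.iUnion_eq_empty.mp (h : (⋃ i, (ts i).vars) = ∅)
  exact this i

theorem Fml.sat_congr {D : Type} (M : Struc D) :
    ∀ (F : Fml) (a b : ℕ → D), (∀ x ∈ F.free, a x = b x) → (F.sat M a ↔ F.sat M b) := by
  intro F
  induction F with
  | tru => intro a b h; exact Iff.rfl
  | fls => intro a b h; exact Iff.rfl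
  | atom p m ts =>
      intro a b h
      simp only [Fml.sat]
      have : (fun i => (ts i).eval M a) = (fun i => (ts i).eval M b) := by
        funext i
        exact Tm.eval_congr M (ts i) a b
          (fun x hx => h x (by simp only [Fml.free, Set.mem_iUnion]; exact ⟨i, hx⟩))
      rw [this]
  | neg F ih =>
      intro a b h
      simp only [Fml.sat]
      rw [ih a b h]
  | conj F G ihF ihG =>
      intro a b h
      simp only [Fml.sat]
      rw [ihF a b (fun x hx => h x (Or.inl hx)), ihG a b (fun x hx => h x (Or.inr hx))]
  | disj F G ihF ihG =>
      intro a b h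
      simp only [Fml.sat]
      rw [ihF a b (fun x hx => h x (Or.inl hx)), ihG a b (fun x hx => h x (Or.inr hx))]
  | all y F ih =>
      intro a b h
      simp only [Fml.sat]
      apply forall_congr'
      intro d
      apply ih
      intro x hx
      by_cases hxy : x = y
      · subst hxy; simp
      · rw [Function.update_of_ne hxy, Function.update_of_ne hxy]
        exact h x ⟨hx, hxy⟩
  | exi y F ih =>
      intro a b h
      simp only [Fml.sat]
      apply exists_congr
      intro d
      apply ih
      intro x hx
      by_cases hxy : x = y
      · subst hxy; simp
      · rw [Function.update_of_ne hxy, Function.update_of_ne hxy]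
        exact h x ⟨hx, hxy⟩

theorem Tm.eval_subst {D : Type} (M : Struc D) (σ : Subst) :
    ∀ (t : Tm) (a : ℕ → D), (t.subst σ).eval M a = t.eval M (fun x => (σ x).eval M a)
  | .var x, a => rfl
  | .app f m ts, a => by
      simp only [Tm.subst, Tm.eval]
      congr 1
      funext i
      exact Tm.eval_subst M σ (ts i) a

/-- ground-or-identity substitutions -/
def GroundOrId (σ : Subst) : Prop := ∀ x, σ x = Tm.var x ∨ (σ x).vars = ∅

theorem GroundOrId.update (σ : Subst) (h : GroundOrId σ) (y : ℕ) :
    GroundOrId (Function.update σ y (Tm.var y)) := by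
  intro x
  by_cases hxy : x = y
  · subst hxy; simp
  · rw [Function.update_of_ne hxy]; exact h x

theorem Fml.sat_subst {D : Type} (M : Struc D) :
    ∀ (F : Fml) (σ : Subst), GroundOrId σ → ∀ (a : ℕ → D),
      ((F.subst σ).sat M a ↔ F.sat M (fun x => (σ x).eval M a)) := by
  intro F
  induction F with
  | tru => intro σ hσ a; exact Iff.rfl
  | fls => intro σ hσ a; exact Iff.rfl
  | atom p m ts =>
      intro σ hσ a
      simp only [Fml.subst, Fml.sat]
      have : (fun i => ((ts i).subst σ).eval M a)
           = (fun i => (ts i).eval M (fun x => (σ x).eval M a)) := by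
        funext i; exact Tm.eval_subst M σ (ts i) a
      rw [this]
  | neg F ih =>
      intro σ hσ a
      simp only [Fml.subst, Fml.sat]
      rw [ih σ hσ a]
  | conj F G ihF ihG =>
      intro σ hσ a
      simp only [Fml.subst, Fml.sat]
      rw [ihF σ hσ a, ihG σ hσ a]
  | disj F G ihF ihG =>
      intro σ hσ a
      simp only [Fml.subst, Fml.sat]
      rw [ihF σ hσ a, ihG σ hσ a]
  | all y F ih =>
      intro σ hσ a
      simp only [Fml.subst, Fml.sat]
      apply forall_congr'
      intro d
      rw [ih _ (hσ.update σ y) (Function.update a y d)]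
      constructor <;> intro h <;> [skip; skip] <;>
      · have heq : (fun x => ((Function.update σ y (Tm.var y)) x).eval M (Function.update a y d))
            = Function.update (fun x => (σ x).eval M a) y d := by
          funext x
          by_cases hxy : x = y
          · subst hxy; simp [Tm.eval]
          · rw [Function.update_of_ne hxy, Function.update_of_ne hxy]
            rcases hσ x with h1 | h1
            · rw [h1]; simp [Tm.eval, Function.update_of_ne hxy]
            · exact Tm.eval_ground M _ h1 _ _
        first
          | (rw [heq] at h; exact h)
          | (rw [heq]; exact h)
  | exi y F ih =>
      intro σ hσ a
      simp only [Fml.subst, Fml.sat]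
      apply exists_congr
      intro d
      rw [ih _ (hσ.update σ y) (Function.update a y d)]
      have heq : (fun x => ((Function.update σ y (Tm.var y)) x).eval M (Function.update a y d))
          = Function.update (fun x => (σ x).eval M a) y d := by
        funext x
        by_cases hxy : x = y
        · subst hxy; simp [Tm.eval]
        · rw [Function.update_of_ne hxy, Function.update_of_ne hxy]
          rcases hσ x with h1 | h1
          · rw [h1]; simp [Tm.eval, Function.update_of_ne hxy]
          · exact Tm.eval_ground M _ h1 _ _
      rw [heq]
theorem update_comp {D D' : Type} (h : D' → D) (a : ℕ → D') (x : ℕ) (d : D') :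
    (fun y => h (Function.update a x d y)) = Function.update (fun y => h (a y)) x (h d) := by
  funext y
  by_cases hxy : y = x
  · subst hxy; simp
  · rw [Function.update_of_ne hxy, Function.update_of_ne hxy]

theorem Tm.eval_hom {D D' : Type} (N : Struc D) (N' : Struc D') (h : D' → D)
    (good : Set (ℕ × ℕ))
    (hfn : ∀ f m p, (f, m) ∈ good → h (N'.fn f m p) = N.fn f m (fun q => h (p q))) :
    ∀ (t : Tm), t.funs ⊆ good → ∀ (a : ℕ → D'),
      h (t.eval N' a) = t.eval N (fun x => h (a x))
  | .var x, ht, a => rfl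
  | .app f m ts, ht, a => by
      simp only [Tm.eval]
      rw [hfn f m _ (ht (by simp [Tm.funs]))]
      congr 1
      funext i
      exact Tm.eval_hom N N' h good hfn (ts i)
        (fun q hq => ht (by simp only [Tm.funs, Set.mem_insert_iff, Set.mem_iUnion]
                            exact Or.inr ⟨i, hq⟩)) a

theorem Fml.sat_hom {D D' : Type} (N : Struc D) (N' : Struc D') (h : D' → D)
    (hsurj : Function.Surjective h) (good : Set (ℕ × ℕ))
    (hfn : ∀ f m p, (f, m) ∈ good → h (N'.fn f m p) = N.fn f m (fun q => h (p q)))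
    (hpr : ∀ p m q, N'.pr p m q ↔ N.pr p m (fun r => h (q r))) :
    ∀ (F : Fml), F.funs ⊆ good → ∀ (a : ℕ → D'),
      (F.sat N' a ↔ F.sat N (fun x => h (a x))) := by
  intro F
  induction F with
  | tru => intro hF a; exact Iff.rfl
  | fls => intro hF a; exact Iff.rfl
  | atom p m ts =>
      intro hF a
      simp only [Fml.sat]
      rw [hpr]
      have : (fun r => h ((ts r).eval N' a)) = (fun r => (ts r).eval N (fun x => h (a x))) := by
        funext r
        exact Tm.eval_hom N N' h good hfn (ts r)
          (fun q hq => hF (by simp only [Fml.funs, Set.mem_iUnion]; exact ⟨r, hq⟩)) a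
      rw [this]
  | neg F ih =>
      intro hF a
      simp only [Fml.sat]
      rw [ih hF a]
  | conj F G ihF ihG =>
      intro hF a
      simp only [Fml.sat]
      rw [ihF (fun q hq => hF (Or.inl hq)) a, ihG (fun q hq => hF (Or.inr hq)) a]
  | disj F G ihF ihG =>
      intro hF a
      simp only [Fml.sat]
      rw [ihF (fun q hq => hF (Or.inl hq)) a, ihG (fun q hq => hF (Or.inr hq)) a]
  | all y F ih =>
      intro hF a
      simp only [Fml.sat]
      constructor
      · intro H d
        obtain ⟨d', rfl⟩ := hsurj d
        have := (ih hF (Function.update a y d')).mp (H d')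
        rwa [update_comp h a y d'] at this
      · intro H d'
        rw [ih hF (Function.update a y d'), update_comp h a y d']
        exact H (h d')
  | exi y F ih =>
      intro hF a
      simp only [Fml.sat]
      constructor
      · rintro ⟨d', H⟩
        refine ⟨h d', ?_⟩
        have := (ih hF (Function.update a y d')).mp H
        rwa [update_comp h a y d'] at this
      · rintro ⟨d, H⟩
        obtain ⟨d', rfl⟩ := hsurj d
        refine ⟨d', ?_⟩
        rw [ih hF (Function.update a y d'), update_comp h a y d']
        exact H

/-- sat transfer between structures agreeing outside a symbol set -/
theorem Fml.sat_agree {D : Type} (M M' : Struc D) (S : Set (ℕ × ℕ))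
    (hag : agreeExcept M M' S) (F : Fml) (hF : ∀ q ∈ F.funs, q ∉ S) (a : ℕ → D) :
    F.sat M' a ↔ F.sat M a := by
  have := Fml.sat_hom M M' (id : D → D) Function.surjective_id {q | q ∉ S}
    (fun f m p hq => by
      have := hag.2 f m hq
      simp only [id] at *
      rw [this])
    (fun p m q => by rw [hag.1]; rfl)
    F (fun q hq => hF q hq) a
  simpa using this
-- ===== Syntactic lemmas =====

theorem Fml.preds_subst : ∀ (F : Fml) (σ : Subst) (pol : Bool),
    (F.subst σ).preds pol = F.preds pol := by
  intro F
  induction F with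
  | tru => intro σ pol; rfl
  | fls => intro σ pol; rfl
  | atom p m ts => intro σ pol; rfl
  | neg F ih => intro σ pol; simp only [Fml.subst, Fml.preds, ih]
  | conj F G ihF ihG => intro σ pol; simp only [Fml.subst, Fml.preds, ihF, ihG]
  | disj F G ihF ihG => intro σ pol; simp only [Fml.subst, Fml.preds, ihF, ihG]
  | all y F ih => intro σ pol; simp only [Fml.subst, Fml.preds, ih]
  | exi y F ih => intro σ pol; simp only [Fml.subst, Fml.preds, ih]

theorem Fml.preds_inv : ∀ (F : Fml) (σ : Subst) (pol : Bool),
    (F.inv σ).preds pol = F.preds pol := by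
  intro F
  induction F with
  | tru => intro σ pol; rfl
  | fls => intro σ pol; rfl
  | atom p m ts => intro σ pol; rfl
  | neg F ih => intro σ pol; simp only [Fml.inv, Fml.preds, ih]
  | conj F G ihF ihG => intro σ pol; simp only [Fml.inv, Fml.preds, ihF, ihG]
  | disj F G ihF ihG => intro σ pol; simp only [Fml.inv, Fml.preds, ihF, ihG]
  | all y F ih => intro σ pol; simp only [Fml.inv, Fml.preds, ih]
  | exi y F ih => intro σ pol; simp only [Fml.inv, Fml.preds, ih]

theorem Tm.funs_subst (σ : Subst) :
    ∀ (t : Tm), (t.subst σ).funs ⊆ t.funs ∪ {q | ∃ x ∈ Subst.dom σ, q ∈ (σ x).funs}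
  | .var x => by
      intro q hq
      by_cases hx : x ∈ Subst.dom σ
      · exact Or.inr ⟨x, hx, hq⟩
      · have : σ x = Tm.var x := by
          by_contra hne
          exact hx hne
        rw [Tm.subst] at hq
        rw [this] at hq
        exact absurd hq (by simp [Tm.funs])
  | .app f m ts => by
      intro q hq
      simp only [Tm.subst, Tm.funs, Set.mem_insert_iff, Set.mem_iUnion] at hq
      rcases hq with rfl | ⟨i, hi⟩
      · exact Or.inl (by simp [Tm.funs])
      · rcases Tm.funs_subst σ (ts i) hi with h | h
        · exact Or.inl (by simp only [Tm.funs, Set.mem_insert_iff, Set.mem_iUnion]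
                           exact Or.inr ⟨i, h⟩)
        · exact Or.inr h

theorem Fml.funs_subst : ∀ (F : Fml) (σ : Subst),
    (F.subst σ).funs ⊆ F.funs ∪ {q | ∃ x ∈ Subst.dom σ, q ∈ (σ x).funs} := by
  intro F
  induction F with
  | tru => intro σ; simp [Fml.subst, Fml.funs]
  | fls => intro σ; simp [Fml.subst, Fml.funs]
  | atom p m ts =>
      intro σ q hq
      simp only [Fml.subst, Fml.funs, Set.mem_iUnion] at hq
      obtain ⟨i, hi⟩ := hq
      rcases Tm.funs_subst σ (ts i) hi with h | h
      · exact Or.inl (by simp only [Fml.funs, Set.mem_iUnion]; exact ⟨i, h⟩)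
      · exact Or.inr h
  | neg F ih => intro σ; exact ih σ
  | conj F G ihF ihG =>
      intro σ q hq
      rcases hq with h | h
      · rcases ihF σ h with h' | h'
        · exact Or.inl (Or.inl h')
        · exact Or.inr h'
      · rcases ihG σ h with h' | h'
        · exact Or.inl (Or.inr h')
        · exact Or.inr h'
  | disj F G ihF ihG =>
      intro σ q hq
      rcases hq with h | h
      · rcases ihF σ h with h' | h'
        · exact Or.inl (Or.inl h')
        · exact Or.inr h'
      · rcases ihG σ h with h' | h'
        · exact Or.inl (Or.inr h')
        · exact Or.inr h'
  | all y F ih =>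
      intro σ q hq
      rcases ih _ hq with h | h
      · exact Or.inl h
      · obtain ⟨x, hx, hq'⟩ := h
        by_cases hxy : x = y
        · subst hxy
          exfalso
          have : Function.update σ x (Tm.var x) x = Tm.var x := by simp
          exact hx this
        · have hx' : x ∈ Subst.dom σ := by
            simp only [Subst.dom, Set.mem_setOf_eq, Function.update_of_ne hxy] at hx ⊢
            exact hx
          have hq'' : q ∈ (σ x).funs := by
            simpa [Function.update_of_ne hxy] using hq'
          exact Or.inr ⟨x, hx', hq''⟩
  | exi y F ih =>
      intro σ q hq
      rcases ih _ hq with h | h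
      · exact Or.inl h
      · obtain ⟨x, hx, hq'⟩ := h
        by_cases hxy : x = y
        · subst hxy
          exfalso
          have : Function.update σ x (Tm.var x) x = Tm.var x := by simp
          exact hx this
        · have hx' : x ∈ Subst.dom σ := by
            simp only [Subst.dom, Set.mem_setOf_eq, Function.update_of_ne hxy] at hx ⊢
            exact hx
          have hq'' : q ∈ (σ x).funs := by
            simpa [Function.update_of_ne hxy] using hq'
          exact Or.inr ⟨x, hx', hq''⟩

-- inv: substituting back gives the original (for ground terms / formulas)
theorem Tm.subst_inv (σ : Subst) :
    ∀ (t : Tm), t.vars = ∅ → (t.inv σ).subst σ = t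
  | .var x, ht => absurd ht (by simp [Tm.vars])
  | .app f m ts, ht => by
      rw [Tm.inv]
      by_cases h : ∃ v ∈ Subst.dom σ, σ v = Tm.app f m ts
      · rw [dif_pos h]
        simp only [Tm.subst]
        exact h.choose_spec.2
      · rw [dif_neg h]
        simp only [Tm.subst]
        congr 1
        funext i
        exact Tm.subst_inv σ (ts i) (Tm.vars_app_empty ht i)

theorem Fml.subst_inv (σ : Subst) :
    ∀ (F : Fml), F.isQF → F.free = ∅ → (F.inv σ).subst σ = F := by
  intro F
  induction F with
  | tru => intro _ _; rfl
  | fls => intro _ _; rfl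
  | atom p m ts =>
      intro _ hfree
      simp only [Fml.inv, Fml.subst]
      congr 1
      funext i
      exact Tm.subst_inv σ (ts i) (Set.iUnion_eq_empty.mp hfree i)
  | neg F ih =>
      intro hqf hfree
      simp only [Fml.inv, Fml.subst, ih hqf hfree]
  | conj F G ihF ihG =>
      intro hqf hfree
      rw [Fml.free] at hfree
      rw [Set.union_empty_iff] at hfree
      simp only [Fml.inv, Fml.subst, ihF hqf.1 hfree.1, ihG hqf.2 hfree.2]
  | disj F G ihF ihG =>
      intro hqf hfree
      rw [Fml.free] at hfree
      rw [Set.union_empty_iff] at hfree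
      simp only [Fml.inv, Fml.subst, ihF hqf.1 hfree.1, ihG hqf.2 hfree.2]
  | all y F ih => intro hqf _; exact absurd hqf (by simp [Fml.isQF])
  | exi y F ih => intro hqf _; exact absurd hqf (by simp [Fml.isQF])

-- free variables of inv
theorem Tm.vars_inv (σ : Subst) :
    ∀ (t : Tm), (t.inv σ).vars ⊆ t.vars ∪ Subst.dom σ
  | .var x => by
      rw [Tm.inv]
      by_cases h : ∃ v ∈ Subst.dom σ, σ v = Tm.var x
      · rw [dif_pos h]
        intro y hy
        simp only [Tm.vars, Set.mem_singleton_iff] at hy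
        subst hy
        exact Or.inr h.choose_spec.1
      · rw [dif_neg h]
        exact Set.subset_union_left
  | .app f m ts => by
      rw [Tm.inv]
      by_cases h : ∃ v ∈ Subst.dom σ, σ v = Tm.app f m ts
      · rw [dif_pos h]
        intro y hy
        simp only [Tm.vars, Set.mem_singleton_iff] at hy
        subst hy
        exact Or.inr h.choose_spec.1
      · rw [dif_neg h]
        intro y hy
        simp only [Tm.vars, Set.mem_iUnion] at hy
        obtain ⟨i, hi⟩ := hy
        rcases Tm.vars_inv σ (ts i) hi with h' | h'
        · exact Or.inl (by simp only [Tm.vars, Set.mem_iUnion]; exact ⟨i, h'⟩)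
        · exact Or.inr h'

theorem Fml.free_inv (σ : Subst) :
    ∀ (F : Fml), (F.inv σ).free ⊆ F.free ∪ Subst.dom σ := by
  intro F
  induction F with
  | tru => simp [Fml.inv, Fml.free]
  | fls => simp [Fml.inv, Fml.free]
  | atom p m ts =>
      intro y hy
      simp only [Fml.inv, Fml.free, Set.mem_iUnion] at hy
      obtain ⟨i, hi⟩ := hy
      rcases Tm.vars_inv σ (ts i) hi with h' | h'
      · exact Or.inl (by simp only [Fml.free, Set.mem_iUnion]; exact ⟨i, h'⟩)
      · exact Or.inr h'
  | neg F ih => exact ih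
  | conj F G ihF ihG =>
      intro y hy
      rcases hy with h | h
      · rcases ihF h with h' | h'
        · exact Or.inl (Or.inl h')
        · exact Or.inr h'
      · rcases ihG h with h' | h'
        · exact Or.inl (Or.inr h')
        · exact Or.inr h'
  | disj F G ihF ihG =>
      intro y hy
      rcases hy with h | h
      · rcases ihF h with h' | h'
        · exact Or.inl (Or.inl h')
        · exact Or.inr h'
      · rcases ihG h with h' | h'
        · exact Or.inl (Or.inr h')
        · exact Or.inr h'
  | all y F ih =>
      intro z hz
      obtain ⟨hz1, hz2⟩ := hz
      rcases ih hz1 with h' | h'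
      · exact Or.inl ⟨h', hz2⟩
      · exact Or.inr h'
  | exi y F ih =>
      intro z hz
      obtain ⟨hz1, hz2⟩ := hz
      rcases ih hz1 with h' | h'
      · exact Or.inl ⟨h', hz2⟩
      · exact Or.inr h'

-- funs of inv : all S-symbols are eliminated, no new symbols
theorem Tm.funs_inv (σ : Subst) (S : Set (ℕ × ℕ)) :
    ∀ (t : Tm),
      (∀ u, isSTerm S u → Tm.hasMaxOcc (STerms S) u t → u ∈ Subst.rng σ) →
      (t.inv σ).funs ⊆ {q | q ∈ t.funs ∧ q ∉ S}
  | .var x, hmax => by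
      rw [Tm.inv]
      by_cases h : ∃ v ∈ Subst.dom σ, σ v = Tm.var x
      · rw [dif_pos h]; simp [Tm.funs]
      · rw [dif_neg h]; simp [Tm.funs]
  | .app f m ts, hmax => by
      rw [Tm.inv]
      by_cases h : ∃ v ∈ Subst.dom σ, σ v = Tm.app f m ts
      · rw [dif_pos h]; simp [Tm.funs]
      · rw [dif_neg h]
        have hfS : (f, m) ∉ S := by
          intro hfS
          have hS : isSTerm S (Tm.app f m ts) := hfS
          have : Tm.app f m ts ∈ Subst.rng σ :=
            hmax _ hS (Or.inl ⟨hS, rfl⟩)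
          exact h this
        intro q hq
        simp only [Tm.funs, Set.mem_insert_iff, Set.mem_iUnion] at hq
        rcases hq with rfl | ⟨i, hi⟩
        · exact ⟨by simp [Tm.funs], hfS⟩
        · have := Tm.funs_inv σ S (ts i)
            (fun u hu hocc => hmax u hu (Or.inr ⟨hfS, ⟨i, hocc⟩⟩)) hi
          exact ⟨by simp only [Tm.funs, Set.mem_insert_iff, Set.mem_iUnion]
                    exact Or.inr ⟨i, this.1⟩, this.2⟩

theorem Fml.funs_inv (σ : Subst) (S : Set (ℕ × ℕ)) :
    ∀ (F : Fml),
      (∀ u, isSTerm S u → Fml.hasMaxOcc (STerms S) u F → u ∈ Subst.rng σ) →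
      (F.inv σ).funs ⊆ {q | q ∈ F.funs ∧ q ∉ S} := by
  intro F
  induction F with
  | tru => intro _; simp [Fml.inv, Fml.funs]
  | fls => intro _; simp [Fml.inv, Fml.funs]
  | atom p m ts =>
      intro hmax q hq
      simp only [Fml.inv, Fml.funs, Set.mem_iUnion] at hq
      obtain ⟨i, hi⟩ := hq
      have := Tm.funs_inv σ S (ts i)
        (fun u hu hocc => hmax u hu ⟨i, hocc⟩) hi
      exact ⟨by simp only [Fml.funs, Set.mem_iUnion]; exact ⟨i, this.1⟩, this.2⟩
  | neg F ih => intro hmax; exact ih hmax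
  | conj F G ihF ihG =>
      intro hmax q hq
      rcases hq with h | h
      · have := ihF (fun u hu hocc => hmax u hu (Or.inl hocc)) h
        exact ⟨Or.inl this.1, this.2⟩
      · have := ihG (fun u hu hocc => hmax u hu (Or.inr hocc)) h
        exact ⟨Or.inr this.1, this.2⟩
  | disj F G ihF ihG =>
      intro hmax q hq
      rcases hq with h | h
      · have := ihF (fun u hu hocc => hmax u hu (Or.inl hocc)) h
        exact ⟨Or.inl this.1, this.2⟩
      · have := ihG (fun u hu hocc => hmax u hu (Or.inr hocc)) h
        exact ⟨Or.inr this.1, this.2⟩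
  | all y F ih => intro hmax; exact ih hmax
  | exi y F ih => intro hmax; exact ih hmax

-- ground terms occurring maximally in ground formulas
theorem Tm.vars_hasMaxOcc (T : Set Tm) :
    ∀ (s : Tm) (t : Tm), Tm.hasMaxOcc T t s → t.vars ⊆ s.vars
  | .var x, t, h => by rw [h.2]
  | .app f m ts, t, h => by
      rcases h with ⟨_, rfl⟩ | ⟨_, i, hi⟩
      · exact subset_rfl
      · exact (Tm.vars_hasMaxOcc T (ts i) t hi).trans
          (by intro y hy; simp only [Tm.vars, Set.mem_iUnion]; exact ⟨i, hy⟩)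

theorem Fml.vars_hasMaxOcc (T : Set Tm) :
    ∀ (F : Fml), F.isQF → F.free = ∅ → ∀ t, Fml.hasMaxOcc T t F → t.vars = ∅ := by
  intro F
  induction F with
  | tru => intro _ _ t h; exact absurd h id
  | fls => intro _ _ t h; exact absurd h id
  | atom p m ts =>
      intro _ hfree t h
      obtain ⟨i, hi⟩ := h
      have h1 := Tm.vars_hasMaxOcc T (ts i) t hi
      have h2 : (ts i).vars = ∅ := Set.iUnion_eq_empty.mp hfree i
      rw [h2] at h1
      exact Set.eq_empty_iff_forall_notMem.mpr (fun x hx => (h1 hx))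
  | neg F ih => intro hqf hfree; exact ih hqf hfree
  | conj F G ihF ihG =>
      intro hqf hfree t h
      rw [Fml.free] at hfree
      rw [Set.union_empty_iff] at hfree
      rcases h with h | h
      · exact ihF hqf.1 hfree.1 t h
      · exact ihG hqf.2 hfree.2 t h
  | disj F G ihF ihG =>
      intro hqf hfree t h
      rw [Fml.free] at hfree
      rw [Set.union_empty_iff] at hfree
      rcases h with h | h
      · exact ihF hqf.1 hfree.1 t h
      · exact ihG hqf.2 hfree.2 t h
  | all y F ih => intro hqf _; exact absurd hqf (by simp [Fml.isQF])
  | exi y F ih => intro hqf _; exact absurd hqf (by simp [Fml.isQF])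
-- ===== The quantifier game =====

/-- The semantic game corresponding to a quantifier prefix. -/
def game {D : Type} (n : ℕ) (v : Fin n → ℕ) (pos : Fin n → Prop)
    (base : (ℕ → D) → Prop) : List (Fin n) → (ℕ → D) → Prop
  | [], a => base a
  | i :: l, a =>
      if pos i then ∃ d, game n v pos base l (Function.update a (v i) d)
      else ∀ d, game n v pos base l (Function.update a (v i) d)

/-- folding the quantifier prefix, as used in `lifted`. -/
noncomputable def prefixFold (n : ℕ) (v : Fin n → ℕ) (tl : Fin n → Tm)
    (FS : Set (ℕ × ℕ)) (body : Fml) (l : List (Fin n)) : Fml :=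
  l.foldr (fun i acc => if isSTerm FS (tl i) then Fml.exi (v i) acc else Fml.all (v i) acc) body

theorem lifted_eq_prefixFold (n : ℕ) (v : Fin n → ℕ) (tl : Fin n → Tm)
    (FS : Set (ℕ × ℕ)) (body : Fml) :
    lifted n v tl FS body = prefixFold n v tl FS body (List.finRange n) := rfl

theorem prefixFold_funs (n : ℕ) (v : Fin n → ℕ) (tl : Fin n → Tm)
    (FS : Set (ℕ × ℕ)) (body : Fml) :
    ∀ l : List (Fin n), (prefixFold n v tl FS body l).funs = body.funs := by
  intro l
  induction l with
  | nil => rfl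
  | cons i l ih =>
      simp only [prefixFold, List.foldr_cons]
      by_cases h : isSTerm FS (tl i)
      · rw [if_pos h]; exact ih
      · rw [if_neg h]; exact ih

theorem prefixFold_preds (n : ℕ) (v : Fin n → ℕ) (tl : Fin n → Tm)
    (FS : Set (ℕ × ℕ)) (body : Fml) (pol : Bool) :
    ∀ l : List (Fin n), (prefixFold n v tl FS body l).preds pol = body.preds pol := by
  intro l
  induction l with
  | nil => rfl
  | cons i l ih =>
      simp only [prefixFold, List.foldr_cons]
      by_cases h : isSTerm FS (tl i)
      · rw [if_pos h]; exact ih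
      · rw [if_neg h]; exact ih

theorem prefixFold_free (n : ℕ) (v : Fin n → ℕ) (tl : Fin n → Tm)
    (FS : Set (ℕ × ℕ)) (body : Fml) :
    ∀ l : List (Fin n), (prefixFold n v tl FS body l).free ⊆
      {x | x ∈ body.free ∧ ∀ i ∈ l, v i ≠ x} := by
  intro l
  induction l with
  | nil => intro x hx; exact ⟨hx, by simp⟩
  | cons i l ih =>
      simp only [prefixFold, List.foldr_cons]
      by_cases h : isSTerm FS (tl i)
      · rw [if_pos h]
        intro x hx
        obtain ⟨hx1, hx2⟩ := hx
        have := ih hx1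
        refine ⟨this.1, ?_⟩
        intro j hj
        rcases List.mem_cons.mp hj with hj | hj
        · subst hj; exact fun he => (by simpa using hx2 : ¬ x = v j) he.symm
        · exact this.2 j hj
      · rw [if_neg h]
        intro x hx
        obtain ⟨hx1, hx2⟩ := hx
        have := ih hx1
        refine ⟨this.1, ?_⟩
        intro j hj
        rcases List.mem_cons.mp hj with hj | hj
        · subst hj; exact fun he => (by simpa using hx2 : ¬ x = v j) he.symm
        · exact this.2 j hj

theorem sat_prefixFold_iff_game {D : Type} (N : Struc D) (n : ℕ) (v : Fin n → ℕ)
    (tl : Fin n → Tm) (FS : Set (ℕ × ℕ)) (K : Fml) :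
    ∀ (l : List (Fin n)) (a : ℕ → D),
      ((prefixFold n v tl FS K l).sat N a ↔
        game n v (fun i => isSTerm FS (tl i)) (fun b => K.sat N b) l a) := by
  intro l
  induction l with
  | nil => intro a; exact Iff.rfl
  | cons i l ih =>
      intro a
      simp only [prefixFold, List.foldr_cons, game]
      by_cases h : isSTerm FS (tl i)
      · rw [if_pos h, if_pos h]
        simp only [Fml.sat]
        exact exists_congr (fun d => ih _)
      · rw [if_neg h, if_neg h]
        simp only [Fml.sat]
        exact forall_congr' (fun d => ih _)

theorem not_sat_prefixFold_iff_game {D : Type} (N : Struc D) (n : ℕ) (v : Fin n → ℕ)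
    (tl : Fin n → Tm) (FS : Set (ℕ × ℕ)) (K : Fml) :
    ∀ (l : List (Fin n)) (a : ℕ → D),
      (¬ (prefixFold n v tl FS K l).sat N a ↔
        game n v (fun i => ¬ isSTerm FS (tl i)) (fun b => ¬ K.sat N b) l a) := by
  intro l
  induction l with
  | nil => intro a; exact Iff.rfl
  | cons i l ih =>
      intro a
      simp only [prefixFold, List.foldr_cons, game]
      by_cases h : isSTerm FS (tl i)
      · rw [if_pos h, if_neg (not_not_intro h)]
        simp only [Fml.sat, not_exists]
        exact forall_congr' (fun d => ih _)
      · rw [if_neg h, if_pos h]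
        simp only [Fml.sat, not_forall]
        exact exists_congr (fun d => ih _)

theorem game_hom {D D' : Type} (n : ℕ) (v : Fin n → ℕ) (pos : Fin n → Prop)
    (base : (ℕ → D) → Prop) (base' : (ℕ → D') → Prop)
    (h : D' → D) (hsurj : Function.Surjective h)
    (hbb : ∀ b, base' b ↔ base (fun x => h (b x))) :
    ∀ (l : List (Fin n)) (a : ℕ → D'),
      (game n v pos base' l a ↔ game n v pos base l (fun x => h (a x))) := by
  intro l
  induction l with
  | nil => intro a; exact hbb a
  | cons i l ih =>
      intro a
      simp only [game]
      by_cases hp : pos i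
      · rw [if_pos hp, if_pos hp]
        constructor
        · rintro ⟨d', H⟩
          refine ⟨h d', ?_⟩
          have := (ih _).mp H
          rwa [update_comp h a (v i) d'] at this
        · rintro ⟨d, H⟩
          obtain ⟨d', rfl⟩ := hsurj d
          refine ⟨d', ?_⟩
          rw [ih _, update_comp h a (v i) d']
          exact H
      · rw [if_neg hp, if_neg hp]
        constructor
        · intro H d
          obtain ⟨d', rfl⟩ := hsurj d
          have := (ih _).mp (H d')
          rwa [update_comp h a (v i) d'] at this
        · intro H d'
          rw [ih _, update_comp h a (v i) d']
          exact H (h d')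

-- ===== The extended structure over D × Tm =====

instance : Nonempty Tm := ⟨Tm.var 0⟩

/-- Extension of a structure to `D × Tm`: the second component traces the term
being evaluated; the value of the traced term `t0` is overridden to `d`. -/
noncomputable def extStruc {D : Type} (N : Struc D) (t0 : Tm) (d : D) : Struc (D × Tm) where
  fn f m p := (if Tm.app f m (fun q => (p q).2) = t0 then d
               else N.fn f m (fun q => (p q).1),
               Tm.app f m (fun q => (p q).2))
  pr p m q := N.pr p m (fun r => (q r).1)

theorem extStruc_eval_app {D : Type} (N : Struc D) (t0 : Tm) (d : D) (a : ℕ → D × Tm)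
    (f m : ℕ) (ts : Fin m → Tm) :
    Tm.eval (extStruc N t0 d) a (.app f m ts) =
      (if Tm.app f m (fun q => (Tm.eval (extStruc N t0 d) a (ts q)).2) = t0 then d
       else N.fn f m (fun q => (Tm.eval (extStruc N t0 d) a (ts q)).1),
       Tm.app f m (fun q => (Tm.eval (extStruc N t0 d) a (ts q)).2)) := rfl

theorem extStruc_eval_snd {D : Type} (N : Struc D) (t0 : Tm) (d : D) (a : ℕ → D × Tm) :
    ∀ (t : Tm), t.vars = ∅ → (t.eval (extStruc N t0 d) a).2 = t
  | .var x, ht => absurd ht (by simp [Tm.vars])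
  | .app f m ts, ht => by
      rw [extStruc_eval_app]
      simp only
      congr 1
      funext i
      exact extStruc_eval_snd N t0 d a (ts i) (Tm.vars_app_empty ht i)

theorem extStruc_eval_fst {D : Type} (N : Struc D) (t0 : Tm) (d : D)
    (a : ℕ → D × Tm) (b : ℕ → D) :
    ∀ (t : Tm), t.vars = ∅ → ¬ t0.occursIn t →
      (t.eval (extStruc N t0 d) a).1 = t.eval N b
  | .var x, ht, _ => absurd ht (by simp [Tm.vars])
  | .app f m ts, ht, hocc => by
      have hne : Tm.app f m ts ≠ t0 := by
        intro he
        exact hocc (Or.inl he.symm)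
      have hargs : ∀ i, ¬ t0.occursIn (ts i) := by
        intro i hi
        exact hocc (Or.inr ⟨i, hi⟩)
      have hsnd : (fun q => (Tm.eval (extStruc N t0 d) a (ts q)).2) = ts := by
        funext i
        exact extStruc_eval_snd N t0 d a (ts i) (Tm.vars_app_empty ht i)
      rw [extStruc_eval_app]
      simp only
      rw [hsnd, if_neg hne]
      simp only [Tm.eval]
      congr 1
      funext i
      exact extStruc_eval_fst N t0 d a b (ts i) (Tm.vars_app_empty ht i) (hargs i)

theorem extStruc_eval_t0 {D : Type} (N : Struc D) (d : D) (a : ℕ → D × Tm)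
    (f : ℕ) (m : ℕ) (ts : Fin m → Tm) (ht : Tm.vars (.app f m ts) = ∅) :
    ((Tm.app f m ts).eval (extStruc N (.app f m ts) d) a).1 = d := by
  have hsnd : (fun q => (Tm.eval (extStruc N (Tm.app f m ts) d) a (ts q)).2) = ts := by
    funext i
    exact extStruc_eval_snd N _ d a (ts i) (Tm.vars_app_empty ht i)
  rw [extStruc_eval_app]
  simp only
  rw [hsnd, if_pos rfl]
-- ===== The core lifting lemma =====

theorem core_lemma (n : ℕ) (v : Fin n → ℕ) (hv : Function.Injective v) (tl : Fin n → Tm)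
    (σ : Subst) (XS : Set (ℕ × ℕ)) (W K : Fml)
    (hKX : ∀ q ∈ K.funs, q ∉ XS)
    (hWX : ∀ q ∈ W.funs, q ∉ XS)
    (hground : ∀ i, (tl i).vars = ∅)
    (pos : Fin n → Prop)
    (hpos : ∀ i, ¬ pos i → isSTerm XS (tl i))
    (horder' : ∀ i j : Fin n, i < j → ¬ (tl j).occursIn (tl i))
    (hσv : ∀ i, σ (v i) = tl i)
    (hσ' : ∀ x, (∀ i, v i ≠ x) → σ x = Tm.var x)
    (hbase : ∀ (D : Type), Nonempty D → ∀ (N : Struc D),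
      (∀ b, W.sat N b) → ∀ b, (K.subst σ).sat N b) :
    ∀ (l : List (Fin n)), l.Pairwise (· < ·) →
      ∀ (P : Set (Fin n)), (∀ j, j ∈ P ∨ j ∈ l) →
      (∀ j ∈ P, ∀ i ∈ l, i ≠ j → ¬ (tl i).occursIn (tl j)) →
      ∀ (D : Type), Nonempty D → ∀ (N : Struc D), (∀ b, W.sat N b) →
      ∀ a : ℕ → D, (∀ j ∈ P, a (v j) = (tl j).eval N a) →
      game n v pos (fun b => K.sat N b) l a := by
  intro l
  induction l with
  | nil =>
      intro _ P hcov hordP D hD N hW a ha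
      simp only [game]
      have hsat : (K.subst σ).sat N a := hbase D hD N hW a
      have hσg : GroundOrId σ := by
        intro x
        by_cases hx : ∃ j, v j = x
        · obtain ⟨j, rfl⟩ := hx
          right
          rw [hσv j]
          exact hground j
        · left
          push_neg at hx
          exact hσ' x hx
      rw [Fml.sat_subst N K σ hσg a] at hsat
      have heq : (fun x => (σ x).eval N a) = a := by
        funext x
        by_cases hx : ∃ j, v j = x
        · obtain ⟨j, rfl⟩ := hx
          rw [hσv j]
          have hP : j ∈ P := (hcov j).resolve_right (by simp)
          exact (ha j hP).symm
        · push_neg at hx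
          rw [hσ' x hx]
          rfl
      rwa [heq] at hsat
  | cons i l ih =>
      intro hpair P hcov hordP D hD N hW a ha
      have hlt : ∀ i' ∈ l, i < i' := (List.pairwise_cons.mp hpair).1
      have hpair' := (List.pairwise_cons.mp hpair).2
      have hcov' : ∀ j, j ∈ insert i P ∨ j ∈ l := by
        intro j
        rcases hcov j with h | h
        · exact Or.inl (Set.mem_insert_of_mem i h)
        · rcases List.mem_cons.mp h with h | h
          · exact Or.inl (h ▸ Set.mem_insert i P)
          · exact Or.inr h
      have hordP' : ∀ j ∈ insert i P, ∀ i' ∈ l, i' ≠ j → ¬ (tl i').occursIn (tl j) := by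
        intro j hj i' hi' hne
        rcases Set.mem_insert_iff.mp hj with rfl | hj
        · exact horder' j i' (hlt i' hi')
        · exact hordP j hj i' (List.mem_cons_of_mem i hi') hne
      simp only [game]
      by_cases hp : pos i
      · rw [if_pos hp]
        refine ⟨(tl i).eval N a, ?_⟩
        apply ih hpair' (insert i P) hcov' hordP' D hD N hW
        intro j hj
        by_cases hji : j = i
        · subst hji
          rw [Function.update_self]
          exact Tm.eval_ground N (tl j) (hground j) a _
        · have hjP : j ∈ P := (Set.mem_insert_iff.mp hj).resolve_left hji
          rw [Function.update_of_ne (fun he => hji (hv he))]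
          rw [ha j hjP]
          exact Tm.eval_ground N (tl j) (hground j) a _
      · rw [if_neg hp]
        intro d
        -- the term tl i is an XS-term
        have hXS : isSTerm XS (tl i) := hpos i hp
        -- extended structure over D × Tm
        haveI hD' : Nonempty (D × Tm) := by
          obtain ⟨d0⟩ := hD
          exact ⟨(d0, Tm.var 0)⟩
        set N' : Struc (D × Tm) := extStruc N (tl i) d with hN'
        have hfn_good : ∀ f' m' p, (f', m') ∉ XS →
            ((extStruc N (tl i) d).fn f' m' p).1 = N.fn f' m' (fun q => (p q).1) := by
          intro f' m' p hnot
          simp only [extStruc]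
          rw [if_neg]
          intro he
          cases htl : tl i with
          | var x => rw [htl] at he; exact Tm.noConfusion he
          | app f m ts =>
              rw [htl] at he hXS
              have h1 : f' = f := by
                injection he
              have h2 : m' = m := by
                injection he with _ h2 _
              exact hnot (by rw [h1, h2]; exact hXS)
        have hsat_hom : ∀ (E : Fml), (∀ q ∈ E.funs, q ∉ XS) → ∀ b,
            (E.sat (extStruc N (tl i) d) b ↔ E.sat N (fun x => (b x).1)) := by
          intro E hE b
          exact Fml.sat_hom N (extStruc N (tl i) d) Prod.fst
            (fun x => ⟨(x, Tm.var 0), rfl⟩) {q | q ∉ XS}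
            (fun f' m' p hq => hfn_good f' m' p hq)
            (fun p m q => Iff.rfl) E (fun q hq => hE q hq) b
        have hW' : ∀ b, W.sat (extStruc N (tl i) d) b := by
          intro b
          rw [hsat_hom W hWX b]
          exact hW _
        -- the new assignment
        set τ : ℕ → Tm := fun x => if h : ∃ j, v j = x then tl h.choose else Tm.var 0 with hτ
        have hτv : ∀ j, τ (v j) = tl j := by
          intro j
          have hex : ∃ j', v j' = v j := ⟨j, rfl⟩
          simp only [hτ, dif_pos hex]
          have := hex.choose_spec
          rw [hv this]
        set a' : ℕ → D × Tm := fun x => (Function.update a (v i) d x, τ x) with ha'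
        have ha'cond : ∀ j ∈ insert i P, a' (v j) = (tl j).eval (extStruc N (tl i) d) a' := by
          intro j hj
          have hsnd : ((tl j).eval (extStruc N (tl i) d) a').2 = tl j :=
            extStruc_eval_snd N (tl i) d a' (tl j) (hground j)
          by_cases hji : j = i
          · subst hji
            have hfst : ((tl j).eval (extStruc N (tl j) d) a').1 = d := by
              cases htl : tl j with
              | var x =>
                  exact absurd (by rw [← htl]; exact hground j : Tm.vars (.var x) = ∅)
                    (by simp [Tm.vars])
              | app f m ts =>
                  exact extStruc_eval_t0 N d a' f m ts (by rw [← htl]; exact hground j)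
            have heval : (tl j).eval (extStruc N (tl j) d) a' = (d, tl j) :=
              Prod.ext hfst hsnd
            rw [heval]
            simp only [ha']
            rw [Function.update_self, hτv j]
          · have hjP : j ∈ P := (Set.mem_insert_iff.mp hj).resolve_left hji
            have hocc : ¬ (tl i).occursIn (tl j) :=
              hordP j hjP i List.mem_cons_self (fun he => hji he.symm)
            have hfst : ((tl j).eval (extStruc N (tl i) d) a').1 = (tl j).eval N a :=
              extStruc_eval_fst N (tl i) d a' a (tl j) (hground j) hocc
            have heval : (tl j).eval (extStruc N (tl i) d) a' = ((tl j).eval N a, tl j) :=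
              Prod.ext hfst hsnd
            rw [heval]
            simp only [ha']
            rw [Function.update_of_ne (fun he => hji (hv he)), hτv j, ha j hjP]
        have hgame' := ih hpair' (insert i P) hcov' hordP' (D × Tm) hD'
          (extStruc N (tl i) d) hW' a' ha'cond
        have := (game_hom n v pos (fun b => K.sat N b) (fun b => K.sat (extStruc N (tl i) d) b)
          Prod.fst (fun x => ⟨(x, Tm.var 0), rfl⟩)
          (fun b => hsat_hom K hKX b) l a').mp hgame'
        have hfa : (fun x => (a' x).1) = Function.update a (v i) d := rfl
        rwa [hfa] at this
-- ===== helpers for the main theorem =====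

theorem isSTerm_not_var {S : Set (ℕ × ℕ)} {t : Tm} (h : isSTerm S t) (x : ℕ) :
    t ≠ Tm.var x := by
  cases t with
  | var y => exact absurd h id
  | app f m ts => exact fun he => Tm.noConfusion he

theorem isSTerm_union_cases {FS GS : Set (ℕ × ℕ)} {t : Tm}
    (h : isSTerm (FS ∪ GS) t) (hnF : ¬ isSTerm FS t) : isSTerm GS t := by
  cases t with
  | var y => exact absurd h id
  | app f m ts => exact (h.resolve_left hnF : (f, m) ∈ GS)
theorem statement11' (F G : Fml) (FS GS : Set (ℕ × ℕ)) (Hg Fe Ge : Fml) (θ : Subst)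
    (hbase : IsLiftBase F G FS GS Hg Fe Ge θ)
    (n : ℕ) (tl : Fin n → Tm)
    (htl_inj : Function.Injective tl)
    (htl_range : ∀ t : Tm, (∃ i, tl i = t) ↔
      (isSTerm (FS ∪ GS) t ∧ Fml.hasMaxOcc (STerms (FS ∪ GS)) t Hg))
    (horder : ∀ i j, Tm.strictSub (tl i) (tl j) → i < j)
    (v : Fin n → ℕ) (hv : Function.Injective v)
    (σ : Subst)
    (hσ : ∀ i, σ (v i) = tl i)
    (hσ' : ∀ x : ℕ, (∀ i, v i ≠ x) → σ x = Tm.var x) :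
    CLInterp F G (lifted n v tl FS (Fml.inv σ Hg)) := by
  obtain ⟨hFsent, hGsent, hdisj, hHgg, hFeqf, hGeqf, hθg, hFexp, hGexp, hFepred, hGepred,
    hFefuns, hGefuns, hFGS, hGFS, hdomθ, hc0, hCL⟩ := hbase
  obtain ⟨cl1, cl2, cl3, cl4, cl5⟩ := hCL
  obtain ⟨hHgqf, hHgfree⟩ := hHgg
  set S : Set (ℕ × ℕ) := FS ∪ GS with hS
  set K : Fml := Fml.inv σ Hg with hK
  set H : Fml := lifted n v tl FS K with hH
  -- disjointness helpers
  have hFS_GS : ∀ q ∈ FS, q ∉ GS := fun q h1 h2 =>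
    Set.eq_empty_iff_forall_notMem.mp hdisj q ⟨h1, h2⟩
  have hF_GS : ∀ q ∈ F.funs, q ∉ GS := fun q h1 h2 =>
    Set.eq_empty_iff_forall_notMem.mp hFGS q ⟨h1, h2⟩
  have hG_FS : ∀ q ∈ G.funs, q ∉ FS := fun q h1 h2 =>
    Set.eq_empty_iff_forall_notMem.mp hGFS q ⟨h1, h2⟩
  -- each tl i is an S-term with a maximal occurrence, hence ground
  have htlS : ∀ i, isSTerm S (tl i) := fun i => ((htl_range (tl i)).mp ⟨i, rfl⟩).1
  have htlmax : ∀ i, Fml.hasMaxOcc (STerms S) (tl i) Hg :=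
    fun i => ((htl_range (tl i)).mp ⟨i, rfl⟩).2
  have hground : ∀ i, (tl i).vars = ∅ :=
    fun i => Fml.vars_hasMaxOcc (STerms S) Hg hHgqf hHgfree (tl i) (htlmax i)
  -- domain and range of σ
  have hdomv : ∀ i, v i ∈ Subst.dom σ := by
    intro i
    have : σ (v i) ≠ Tm.var (v i) := by
      rw [hσ i]
      exact isSTerm_not_var (htlS i) (v i)
    exact this
  have hdomsub : ∀ x ∈ Subst.dom σ, ∃ i, v i = x := by
    intro x hx
    by_contra hno
    push_neg at hno
    exact hx (hσ' x hno)
  have hrng : ∀ u, isSTerm S u → Fml.hasMaxOcc (STerms S) u Hg → u ∈ Subst.rng σ := by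
    intro u hu hocc
    obtain ⟨i, hi⟩ := (htl_range u).mpr ⟨hu, hocc⟩
    exact ⟨v i, hdomv i, by rw [hσ i, hi]⟩
  -- funs of K
  have hKfuns0 : K.funs ⊆ {q | q ∈ Hg.funs ∧ q ∉ S} := Fml.funs_inv σ S Hg hrng
  have hHgfuns : Hg.funs ⊆ (F.funs ∩ G.funs) ∪ S := by
    intro q hq
    obtain ⟨c0, hc0S, hc0rng⟩ := hc0
    have h1 : q ∈ (Fe.subst θ).funs := (cl4 hq).1
    rcases Fml.funs_subst Fe θ h1 with h | h
    · rcases hFefuns h with h' | h'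
      · exact Or.inl h'
      · exact Or.inr (Or.inl h')
    · obtain ⟨x, hx, hq'⟩ := h
      rcases hc0rng x hx hq' with h' | h'
      · rcases h' with h'' | h''
        · rcases hFefuns h'' with h3 | h3
          · exact Or.inl h3
          · exact Or.inr (Or.inl h3)
        · rcases hGefuns h'' with h3 | h3
          · exact Or.inl h3
          · exact Or.inr (Or.inr h3)
      · simp only [Set.mem_singleton_iff] at h'
        subst h'
        exact Or.inr hc0S
  have hKfuns : K.funs ⊆ F.funs ∩ G.funs := by
    intro q hq
    obtain ⟨h1, h2⟩ := hKfuns0 hq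
    exact (hHgfuns h1).resolve_right h2
  have hKnoS : ∀ q ∈ K.funs, q ∉ S := fun q hq => (hKfuns0 hq).2
  -- funs of H
  have hHfuns : H.funs = K.funs := by
    rw [hH, lifted_eq_prefixFold]
    exact prefixFold_funs n v tl FS K (List.finRange n)
  -- ground-or-id of θ
  have hθgi : GroundOrId θ := by
    intro x
    by_cases hx : x ∈ Subst.dom θ
    · exact Or.inr (hθg x hx)
    · left
      by_contra hne
      exact hx hne
  -- orderings
  have horder' : ∀ i j : Fin n, i < j → ¬ (tl j).occursIn (tl i) := by
    intro i j hij hocc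
    by_cases he : tl j = tl i
    · have := htl_inj he
      subst this
      exact lt_irrefl _ hij
    · exact absurd (horder j i ⟨he, hocc⟩) (not_lt.mpr (le_of_lt hij))
  have hpairwise : (List.finRange n).Pairwise (· < ·) := List.pairwise_lt_finRange n
  have hcov : ∀ j : Fin n, j ∈ (∅ : Set (Fin n)) ∨ j ∈ List.finRange n :=
    fun j => Or.inr (List.mem_finRange j)
  have hordP : ∀ j ∈ (∅ : Set (Fin n)), ∀ i ∈ List.finRange n, i ≠ j →
      ¬ (tl i).occursIn (tl j) := fun j hj => absurd hj (Set.notMem_empty j)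
  -- side 1 : F entails H
  have ent1 : entails F H := by
    intro D hD M a hFa
    have hFall : ∀ b, F.sat M b := by
      intro b
      exact (Fml.sat_congr M F a b (fun x hx => absurd (hFsent ▸ hx) (Set.notMem_empty x))).mp hFa
    obtain ⟨M', hagM', hFe⟩ := hFexp D hD M hFall
    have hbase1 : ∀ (D' : Type), Nonempty D' → ∀ (N : Struc D'),
        (∀ b, Fe.sat N b) → ∀ b, (K.subst σ).sat N b := by
      intro D' hD' N hWsat b
      rw [hK, Fml.subst_inv σ Hg hHgqf hHgfree]
      apply cl1 D' hD' N b
      rw [Fml.sat_subst N Fe θ hθgi b]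
      exact hWsat _
    have hgame := core_lemma n v hv tl σ GS Fe K
      (fun q hq => fun hqGS => hKnoS q hq (Or.inr hqGS))
      (fun q hq => fun hqGS => by
        rcases hFefuns hq with h | h
        · exact hF_GS q h.1 hqGS
        · exact hFS_GS q h hqGS)
      hground (fun i => isSTerm FS (tl i))
      (fun i hni => isSTerm_union_cases (htlS i) hni)
      horder' hσ hσ' hbase1 (List.finRange n) hpairwise ∅ hcov hordP D hD M' hFe a
      (fun j hj => absurd hj (Set.notMem_empty j))
    have hsatH : H.sat M' a := by
      rw [hH, lifted_eq_prefixFold]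
      exact (sat_prefixFold_iff_game M' n v tl FS K (List.finRange n) a).mpr hgame
    have : ∀ q ∈ H.funs, q ∉ FS := by
      intro q hq
      rw [hHfuns] at hq
      exact hG_FS q (hKfuns hq).2
    exact (Fml.sat_agree M M' FS hagM' H this a).mp hsatH
  -- side 2 : H entails G
  have ent2 : entails H G := by
    intro D hD M a hHa
    apply hGexp D hD M ?_ a
    intro M' hagM'
    by_contra hno
    push_neg at hno
    have hW : ∀ b, (Fml.neg Ge).sat M' b := fun b => hno b
    have hbase2 : ∀ (D' : Type), Nonempty D' → ∀ (N : Struc D'),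
        (∀ b, (Fml.neg Ge).sat N b) → ∀ b, ((Fml.neg K).subst σ).sat N b := by
      intro D' hD' N hWsat b
      show ¬ (K.subst σ).sat N b
      rw [hK, Fml.subst_inv σ Hg hHgqf hHgfree]
      intro hHgsat
      have := cl2 D' hD' N b hHgsat
      rw [Fml.sat_subst N Ge θ hθgi b] at this
      exact hWsat _ this
    have hgame := core_lemma n v hv tl σ FS (Fml.neg Ge) (Fml.neg K)
      (fun q hq => fun hqFS => hKnoS q hq (Or.inl hqFS))
      (fun q hq => fun hqFS => by
        rcases hGefuns hq with h | h
        · exact hG_FS q h.2 hqFS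
        · exact hFS_GS q hqFS h)
      hground (fun i => ¬ isSTerm FS (tl i))
      (fun i hni => not_not.mp hni)
      horder' hσ hσ' hbase2 (List.finRange n) hpairwise ∅ hcov hordP D hD M' hW a
      (fun j hj => absurd hj (Set.notMem_empty j))
    have hnotH : ¬ H.sat M' a := by
      rw [hH, lifted_eq_prefixFold]
      exact (not_sat_prefixFold_iff_game M' n v tl FS K (List.finRange n) a).mpr hgame
    have hHnoGS : ∀ q ∈ H.funs, q ∉ GS := by
      intro q hq
      rw [hHfuns] at hq
      exact hF_GS q (hKfuns hq).1
    exact hnotH ((Fml.sat_agree M M' GS hagM' H hHnoGS a).mpr hHa)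
  -- predicate condition
  have predcond : H.pred ⊆ F.pred ∩ G.pred := by
    have h1 : H.pred = Hg.pred := by
      show H.preds true = Hg.preds true
      rw [hH, lifted_eq_prefixFold]
      rw [prefixFold_preds n v tl FS K true (List.finRange n)]
      exact Fml.preds_inv Hg σ true
    rw [h1]
    intro q hq
    have := cl3 hq
    constructor
    · apply hFepred
      have : q ∈ (Fe.subst θ).pred := this.1
      rwa [show (Fe.subst θ).pred = Fe.pred from Fml.preds_subst Fe θ true] at this
    · apply hGepred
      have : q ∈ (Ge.subst θ).pred := this.2
      rwa [show (Ge.subst θ).pred = Ge.pred from Fml.preds_subst Ge θ true] at this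
  -- funs condition
  have funscond : H.funs ⊆ F.funs ∩ G.funs := by
    rw [hHfuns]
    exact hKfuns
  -- free condition
  have freecond : H.free ⊆ F.free ∩ G.free := by
    intro x hx
    exfalso
    have h1 := prefixFold_free n v tl FS K (List.finRange n) (hH ▸ hx)
    have h2 : x ∈ K.free := h1.1
    have h3 := Fml.free_inv σ Hg h2
    rw [hHgfree] at h3
    rcases h3 with h3 | h3
    · exact Set.notMem_empty x h3
    · obtain ⟨i, hi⟩ := hdomsub x h3
      exact h1.2 i (List.mem_finRange i) hi
  exact ⟨ent1, ent2, predcond, funscond, freecond⟩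

/-- Interpolant lifting: given the first five components F, G, 𝔽, 𝔾, H_grd of an
interpolant lifting base (whose remaining components F_exp, G_exp, θ exist), let
t₁,…,tₙ be the 𝔽𝔾-terms with an 𝔽𝔾-terms-maximal occurrence in H_grd, listed so
that strict subterms come first, let v₁,…,vₙ be fresh (distinct) variables, let σ be
the injective substitution vᵢ ↦ tᵢ, and let Qᵢ = ∃ if tᵢ is an 𝔽-term and Qᵢ = ∀ if
it is a 𝔾-term.  Conclusion: Q₁v₁ … Qₙvₙ H_grd⁻σ relates to F and G as stated. -/
theorem statement11 (F G : Fml) (FS GS : Set (ℕ × ℕ)) (Hg Fe Ge : Fml) (θ : Subst)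
    (hbase : IsLiftBase F G FS GS Hg Fe Ge θ)
    (n : ℕ) (tl : Fin n → Tm)
    (htl_inj : Function.Injective tl)
    (htl_range : ∀ t : Tm, (∃ i, tl i = t) ↔
      (isSTerm (FS ∪ GS) t ∧ Fml.hasMaxOcc (STerms (FS ∪ GS)) t Hg))
    (horder : ∀ i j, Tm.strictSub (tl i) (tl j) → i < j)
    (v : Fin n → ℕ) (hv : Function.Injective v)
    (σ : Subst)
    (hσ : ∀ i, σ (v i) = tl i)
    (hσ' : ∀ x : ℕ, (∀ i, v i ≠ x) → σ x = Tm.var x) :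
    CLInterp F G (lifted n v tl FS (Fml.inv σ Hg)) :=
  statement11' F G FS GS Hg Fe Ge θ hbase n tl htl_inj htl_range horder v hv σ hσ hσ'

end CTIF
end

section
/- Let ⟨F, G, 𝔽, 𝔾, H_grd, F_exp, G_exp, θ⟩ be an interpolant lifting base, let 𝔽𝔾 = 𝔽 ∪ 𝔾, let {t₁,…,tₙ} be the set of the 𝔽𝔾-terms with an 𝔽𝔾-terms-maximal occurrence in H_grd, ordered such that if tᵢ is a strict subterm of tⱼ then i < j, let v₁,…,vₙ be fresh variables, let σ = {vᵢ ↦ tᵢ}, and for each i let Qᵢ = ∃ if tᵢ is an 𝔽-term and Qᵢ = ∀ if tᵢ is a 𝔾-term. Then Q₁v₁ … Qₙvₙ H_grd⁻σ ⊨ G. -/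
open Classical

namespace CTIF

/-- Size of a term. -/
def tsize : Tm → ℕ
  | .var _ => 1
  | .app _ k ts => 1 + ∑ i : Fin k, tsize (ts i)

/-- Evaluation of a term where list terms `tl j` are overridden by values `d j`. -/
noncomputable def hhAux (n : ℕ) (tl : Fin n → Tm) {D : Type} (M' : Struc D)
    (d₀ : D) (d : Fin n → D) : Tm → D
  | .var _ => d₀
  | .app f k ts =>
      if h : ∃ j, tl j = Tm.app f k ts then d h.choose
      else M'.fn f k (fun i => hhAux n tl M' d₀ d (ts i))
/-- Interpolant lifting: given the first five components F, G, 𝔽, 𝔾, H_grd of an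
interpolant lifting base (whose remaining components F_exp, G_exp, θ exist), let
t₁,…,tₙ be the 𝔽𝔾-terms with an 𝔽𝔾-terms-maximal occurrence in H_grd, listed so
that strict subterms come first, let v₁,…,vₙ be fresh (distinct) variables, let σ be
the injective substitution vᵢ ↦ tᵢ, and let Qᵢ = ∃ if tᵢ is an 𝔽-term and Qᵢ = ∀ if
it is a 𝔾-term.  Conclusion: Q₁v₁ … Qₙvₙ H_grd⁻σ relates to F and G as stated. -/
theorem statement14 (F G : Fml) (FS GS : Set (ℕ × ℕ)) (Hg Fe Ge : Fml) (θ : Subst)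
    (hbase : IsLiftBase F G FS GS Hg Fe Ge θ)
    (n : ℕ) (tl : Fin n → Tm)
    (htl_inj : Function.Injective tl)
    (htl_range : ∀ t : Tm, (∃ i, tl i = t) ↔
      (isSTerm (FS ∪ GS) t ∧ Fml.hasMaxOcc (STerms (FS ∪ GS)) t Hg))
    (horder : ∀ i j, Tm.strictSub (tl i) (tl j) → i < j)
    (v : Fin n → ℕ) (hv : Function.Injective v)
    (σ : Subst)
    (hσ : ∀ i, σ (v i) = tl i)
    (hσ' : ∀ x : ℕ, (∀ i, v i ≠ x) → σ x = Tm.var x) :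
    entails (lifted n v tl FS (Fml.inv σ Hg)) G := by
  obtain ⟨hFsent, hGsent, hFGdisj, ⟨hHgQF, hHgfree⟩, hFeQF, hGeQF, hθg,
    hi, hi', hii, hii', hiii, hiii', hiv, hiv', hvdom, ⟨c₀, hc₀, hθfuns⟩,
    hFeHg, hHgGe, hHgpred, hHgfuns, hHgfree2⟩ := hbase
  intro D hD M a hsat
  refine hi' D hD M ?_ a
  intro M' hagree
  obtain ⟨hpr, hfn⟩ := hagree
  have d₀ : D := Classical.choice hD
  -- basic facts about the term list and σ
  have htl_st : ∀ i, isSTerm (FS ∪ GS) (tl i) := fun i => ((htl_range (tl i)).mp ⟨i, rfl⟩).1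
  have htl_ne_var : ∀ i x, tl i ≠ Tm.var x := by
    intro i x h
    have h2 := htl_st i
    rw [h] at h2
    exact h2
  have hdomv : ∀ x, x ∈ Subst.dom σ → ∃ i, v i = x := by
    intro x hx
    by_contra hno
    push_neg at hno
    exact hx (hσ' x hno)
  have hvdomσ : ∀ i, v i ∈ Subst.dom σ := by
    intro i
    show σ (v i) ≠ Tm.var (v i)
    rw [hσ i]; exact htl_ne_var i _
  -- occurrence and size facts
  have occ_self : ∀ t : Tm, t.occursIn t := by
    intro t; cases t <;> simp [Tm.occursIn]
  have tsize_le : ∀ (t s : Tm), s.occursIn t → tsize s ≤ tsize t := by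
    intro t
    induction t with
    | var x =>
      intro s hs
      rw [show s = Tm.var x from hs]
    | app f k ts ih =>
      intro s hs
      rcases hs with h | ⟨i, hi⟩
      · rw [h]
      · have h1 := ih i s hi
        have h2 : tsize (ts i) ≤ ∑ j, tsize (ts j) :=
          Finset.single_le_sum (f := fun j => tsize (ts j)) (fun _ _ => Nat.zero_le _) (Finset.mem_univ i)
        have h3 : tsize (Tm.app f k ts) = 1 + ∑ j, tsize (ts j) := rfl
        omega
  -- hhAux depends only on values of d at indices occurring in t
  have hhdep : ∀ (t : Tm) (d d' : Fin n → D),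
      (∀ m, (tl m).occursIn t → d m = d' m) →
      hhAux n tl M' d₀ d t = hhAux n tl M' d₀ d' t := by
    intro t
    induction t with
    | var x => intro d d' _; simp [hhAux]
    | app f k ts ih =>
      intro d d' hdd
      by_cases hex : ∃ j, tl j = Tm.app f k ts
      · simp only [hhAux, dif_pos hex]
        exact hdd _ (by rw [hex.choose_spec]; exact occ_self _)
      · simp only [hhAux, dif_neg hex]
        congr 1
        funext i
        exact ih i d d' (fun m hm => hdd m (Or.inr ⟨i, hm⟩))
  -- the game lemma
  have game : ∀ L : List (Fin n), List.Pairwise (· < ·) L → ∀ a0 : ℕ → D,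
      (L.foldr (fun i acc => if isSTerm FS (tl i) then Fml.exi (v i) acc else Fml.all (v i) acc)
        (Fml.inv σ Hg)).sat M a0 →
      ∃ b : ℕ → D, (Fml.inv σ Hg).sat M b ∧
        (∀ x, (∀ j ∈ L, v j ≠ x) → b x = a0 x) ∧
        (∀ j ∈ L, ∀ g k ts, tl j = Tm.app g k ts → (g, k) ∉ FS →
          b (v j) = M'.fn g k (fun i => hhAux n tl M' d₀ (fun m => b (v m)) (ts i))) := by
    intro L
    induction L with
    | nil =>
      intro _ a0 hs
      exact ⟨a0, hs, fun x _ => rfl, fun j hj => absurd hj List.not_mem_nil⟩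
    | cons j L ihL =>
      intro hpw a0 hs
      obtain ⟨hjL, hpwL⟩ := List.pairwise_cons.mp hpw
      simp only [List.foldr_cons] at hs
      have hjninL : ∀ j' ∈ L, v j' ≠ v j := by
        intro j' hj' hvv
        have h1 := hv hvv
        have h2 := hjL j' hj'
        rw [h1] at h2
        exact lt_irrefl _ h2
      by_cases hFSj : isSTerm FS (tl j)
      · rw [if_pos hFSj] at hs
        simp only [Fml.sat] at hs
        obtain ⟨e, hse⟩ := hs
        obtain ⟨b, hb1, hb2, hb3⟩ := ihL hpwL _ hse
        refine ⟨b, hb1, ?_, ?_⟩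
        · intro x hx
          rw [hb2 x (fun j' hj' => hx j' (List.mem_cons_of_mem _ hj')),
            Function.update_of_ne (Ne.symm (hx j List.mem_cons_self))]
        · intro j' hj' g k ts heq hgk
          rcases List.mem_cons.mp hj' with rfl | hj'
          · exact absurd (show (g, k) ∈ FS by rw [heq] at hFSj; exact hFSj) hgk
          · exact hb3 j' hj' g k ts heq hgk
      · rw [if_neg hFSj] at hs
        simp only [Fml.sat] at hs
        cases htlj : tl j with
        | var x =>
          obtain ⟨b, hb1, hb2, hb3⟩ := ihL hpwL _ (hs d₀)
          refine ⟨b, hb1, ?_, ?_⟩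
          · intro x' hx
            rw [hb2 x' (fun j' hj' => hx j' (List.mem_cons_of_mem _ hj')),
              Function.update_of_ne (Ne.symm (hx j List.mem_cons_self))]
          · intro j' hj' g k ts heq hgk
            rcases List.mem_cons.mp hj' with rfl | hj'
            · rw [htlj] at heq; exact absurd heq (by simp)
            · exact hb3 j' hj' g k ts heq hgk
        | app g0 k0 ts0 =>
          obtain ⟨b, hb1, hb2, hb3⟩ :=
            ihL hpwL _ (hs (M'.fn g0 k0 (fun i => hhAux n tl M' d₀ (fun m => a0 (v m)) (ts0 i))))
          have hblow : ∀ m, m < j → b (v m) = a0 (v m) := by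
            intro m hm
            have h1 : ∀ j' ∈ L, v j' ≠ v m := by
              intro j' hj' hvv
              have h2 := hv hvv
              have h3 := hjL j' hj'
              rw [h2] at h3
              exact lt_irrefl _ (lt_trans hm h3)
            rw [hb2 _ h1, Function.update_of_ne]
            intro hvv
            have h2 := hv hvv
            rw [h2] at hm
            exact lt_irrefl _ hm
          have hbvj : b (v j) = M'.fn g0 k0 (fun i => hhAux n tl M' d₀ (fun m => a0 (v m)) (ts0 i)) := by
            rw [hb2 _ hjninL, Function.update_self]
          have hocc : ∀ i m, (tl m).occursIn (ts0 i) → m < j := by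
            intro i m hm
            apply horder
            constructor
            · intro hEq
              have h1 := tsize_le (ts0 i) (tl m) hm
              rw [hEq, htlj] at h1
              have h2 : tsize (ts0 i) ≤ ∑ i', tsize (ts0 i') :=
                Finset.single_le_sum (f := fun i' => tsize (ts0 i')) (fun _ _ => Nat.zero_le _) (Finset.mem_univ i)
              have h3 : tsize (Tm.app g0 k0 ts0) = 1 + ∑ i', tsize (ts0 i') := rfl
              omega
            · rw [htlj]
              exact Or.inr ⟨i, hm⟩
          refine ⟨b, hb1, ?_, ?_⟩
          · intro x' hx
            rw [hb2 x' (fun j' hj' => hx j' (List.mem_cons_of_mem _ hj')),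
              Function.update_of_ne (Ne.symm (hx j List.mem_cons_self))]
          · intro j' hj' g k ts heq hgk
            rcases List.mem_cons.mp hj' with rfl | hj'
            · rw [htlj] at heq
              injection heq with e1 e2 e3
              subst e1; subst e2
              have e3' := eq_of_heq e3
              subst e3'
              rw [hbvj]
              congr 1
              funext i
              exact hhdep (ts0 i) _ _ (fun m hm => (hblow m (hocc i m hm)).symm)
            · exact hb3 j' hj' g k ts heq hgk
  -- apply the game
  have hsat' : ((List.finRange n).foldr
      (fun i acc => if isSTerm FS (tl i) then Fml.exi (v i) acc else Fml.all (v i) acc)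
      (Fml.inv σ Hg)).sat M a := hsat
  obtain ⟨b, hbody, hbfix, hP1⟩ := game (List.finRange n) (List.pairwise_lt_finRange n) a hsat'
  -- the term structure
  let T : Struc Tm := ⟨fun f k ts => Tm.app f k ts,
    fun p k ts => M'.pr p k (fun i => hhAux n tl M' d₀ (fun m => b (v m)) (ts i))⟩
  have evalT : ∀ t : Tm, Tm.eval T Tm.var t = t := by
    intro t
    induction t with
    | var x => rfl
    | app f k ts ih =>
      show Tm.app f k (fun i => Tm.eval T Tm.var (ts i)) = Tm.app f k ts
      exact congrArg (Tm.app f k) (funext ih)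
  -- term lemma 1
  have TL1 : ∀ t : Tm, t.vars = ∅ →
      (∀ s, Tm.hasMaxOcc (STerms (FS ∪ GS)) s t → ∃ j, tl j = s) →
      Tm.eval M b (Tm.inv σ t) = hhAux n tl M' d₀ (fun m => b (v m)) t := by
    intro t
    induction t with
    | var x =>
      intro hvars _
      exact absurd hvars (by simp [Tm.vars])
    | app f k ts ih =>
      intro hvars hmax
      by_cases hex : ∃ j, tl j = Tm.app f k ts
      · have hc : ∃ y ∈ Subst.dom σ, σ y = Tm.app f k ts := by
          obtain ⟨j, hj⟩ := hex
          exact ⟨v j, hvdomσ j, by rw [hσ j, hj]⟩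
        simp only [Tm.inv, dif_pos hc, Tm.eval, hhAux, dif_pos hex]
        obtain ⟨j₀, hj₀⟩ := hdomv _ hc.choose_spec.1
        have e1 : tl j₀ = Tm.app f k ts := by rw [← hσ j₀, hj₀]; exact hc.choose_spec.2
        have e2 : tl hex.choose = Tm.app f k ts := hex.choose_spec
        have e3 : hex.choose = j₀ := htl_inj (e2.trans e1.symm)
        rw [e3, hj₀]
      · have hc : ¬ ∃ y ∈ Subst.dom σ, σ y = Tm.app f k ts := by
          rintro ⟨y, hydom, hyeq⟩
          obtain ⟨i0, rfl⟩ := hdomv y hydom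
          rw [hσ i0] at hyeq
          exact hex ⟨i0, hyeq⟩
        have hnotS : Tm.app f k ts ∉ STerms (FS ∪ GS) := by
          intro hS
          exact hex (hmax _ (Or.inl ⟨hS, rfl⟩))
        have hfk : (f, k) ∉ GS := fun h => hnotS (Or.inr h)
        simp only [Tm.inv, dif_neg hc, Tm.eval, hhAux, dif_neg hex]
        rw [hfn f k hfk]
        congr 1
        funext i
        exact ih i (Set.iUnion_eq_empty.mp hvars i) (fun s hs => hmax s (Or.inr ⟨hnotS, ⟨i, hs⟩⟩))
  -- formula lemma 1
  have FL1 : ∀ E : Fml, E.isQF → E.free = ∅ →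
      (∀ s, Fml.hasMaxOcc (STerms (FS ∪ GS)) s E → ∃ j, tl j = s) →
      ((Fml.inv σ E).sat M b ↔ E.sat T Tm.var) := by
    intro E
    induction E with
    | tru => intro _ _ _; simp [Fml.inv, Fml.sat]
    | fls => intro _ _ _; simp [Fml.inv, Fml.sat]
    | atom p m ts =>
      intro _ hfree hmax
      simp only [Fml.inv, Fml.sat]
      have e1 : (fun i => Tm.eval M b (Tm.inv σ (ts i)))
          = fun i => hhAux n tl M' d₀ (fun m => b (v m)) (ts i) :=
        funext fun i => TL1 (ts i) (Set.iUnion_eq_empty.mp hfree i) (fun s hs => hmax s ⟨i, hs⟩)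
      simp only [evalT]
      rw [e1]
      show M.pr p m _ ↔ M'.pr p m _
      rw [hpr]
    | neg E ihE =>
      intro hqf hfree hmax
      simp only [Fml.inv, Fml.sat]
      rw [ihE hqf hfree hmax]
    | conj E1 E2 ih1 ih2 =>
      intro hqf hfree hmax
      obtain ⟨hf1, hf2⟩ := Set.union_empty_iff.mp hfree
      simp only [Fml.inv, Fml.sat]
      rw [ih1 hqf.1 hf1 (fun s hs => hmax s (Or.inl hs)),
        ih2 hqf.2 hf2 (fun s hs => hmax s (Or.inr hs))]
    | disj E1 E2 ih1 ih2 =>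
      intro hqf hfree hmax
      obtain ⟨hf1, hf2⟩ := Set.union_empty_iff.mp hfree
      simp only [Fml.inv, Fml.sat]
      rw [ih1 hqf.1 hf1 (fun s hs => hmax s (Or.inl hs)),
        ih2 hqf.2 hf2 (fun s hs => hmax s (Or.inr hs))]
    | all x E ihE => intro hqf; exact hqf.elim
    | exi x E ihE => intro hqf; exact hqf.elim
  -- every term with a maximal occurrence is an S-term
  have hmoT : ∀ (t s : Tm), Tm.hasMaxOcc (STerms (FS ∪ GS)) s t → isSTerm (FS ∪ GS) s := by
    intro t
    induction t with
    | var x =>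
      intro s hs
      rw [hs.2]; exact hs.1
    | app f k ts ih =>
      intro s hs
      rcases hs with ⟨h1, h2⟩ | ⟨_, ⟨i, hi⟩⟩
      · rw [h2]; exact h1
      · exact ih i s hi
  have hmoF : ∀ (E : Fml) (s : Tm), Fml.hasMaxOcc (STerms (FS ∪ GS)) s E → isSTerm (FS ∪ GS) s := by
    intro E
    induction E with
    | tru => intro s h; exact h.elim
    | fls => intro s h; exact h.elim
    | atom p m ts =>
      rintro s ⟨i, hi⟩
      exact hmoT _ s hi
    | neg E ihE => exact ihE
    | conj E1 E2 ih1 ih2 => rintro s (h | h); exacts [ih1 s h, ih2 s h]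
    | disj E1 E2 ih1 ih2 => rintro s (h | h); exacts [ih1 s h, ih2 s h]
    | all x E ihE => exact ihE
    | exi x E ihE => exact ihE
  have hHgmax : ∀ s, Fml.hasMaxOcc (STerms (FS ∪ GS)) s Hg → ∃ j, tl j = s :=
    fun s hs => (htl_range s).mpr ⟨hmoF Hg s hs, hs⟩
  have hHgT : Hg.sat T Tm.var := (FL1 Hg hHgQF hHgfree hHgmax).mp hbody
  have hGeθT : (Ge.subst θ).sat T Tm.var := hHgGe Tm ⟨Tm.var 0⟩ T Tm.var hHgT
  -- Ge contains no FS symbols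
  have hGeFS : Ge.funs ∩ FS = ∅ := by
    apply Set.eq_empty_iff_forall_notMem.mpr
    rintro x ⟨hxGe, hxFS⟩
    rcases hiii' hxGe with hsh | hGS
    · exact Set.eq_empty_iff_forall_notMem.mp hiv' x ⟨hsh.2, hxFS⟩
    · exact Set.eq_empty_iff_forall_notMem.mp hFGdisj x ⟨hxFS, hGS⟩
  -- the assignment for Ge
  refine ⟨fun x => hhAux n tl M' d₀ (fun m => b (v m)) (θ x), ?_⟩
  -- term lemma 2
  have TL2 : ∀ s : Tm, s.funs ∩ FS = ∅ →
      Tm.eval M' (fun x => hhAux n tl M' d₀ (fun m => b (v m)) (θ x)) s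
        = hhAux n tl M' d₀ (fun m => b (v m)) (s.subst θ) := by
    intro s
    induction s with
    | var x => intro _; rfl
    | app g k ss ih =>
      intro hfuns
      have hgk : (g, k) ∉ FS := by
        intro h
        exact Set.eq_empty_iff_forall_notMem.mp hfuns (g, k) ⟨Set.mem_insert _ _, h⟩
      have hsub : ∀ i, (ss i).funs ∩ FS = ∅ := by
        intro i
        apply Set.eq_empty_iff_forall_notMem.mpr
        rintro x ⟨hx1, hx2⟩
        exact Set.eq_empty_iff_forall_notMem.mp hfuns x
          ⟨Set.mem_insert_of_mem _ (Set.mem_iUnion.mpr ⟨i, hx1⟩), hx2⟩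
      simp only [Tm.eval, Tm.subst]
      by_cases hex : ∃ j, tl j = Tm.app g k (fun i => (ss i).subst θ)
      · simp only [hhAux, dif_pos hex]
        have hspec := hex.choose_spec
        rw [hP1 hex.choose (List.mem_finRange _) g k _ hspec hgk]
        congr 1
        funext i
        exact ih i (hsub i)
      · simp only [hhAux, dif_neg hex]
        congr 1
        funext i
        exact ih i (hsub i)
  -- formula lemma 2
  have FL2 : ∀ E : Fml, E.isQF → E.funs ∩ FS = ∅ →
      ((E.subst θ).sat T Tm.var ↔
        E.sat M' (fun x => hhAux n tl M' d₀ (fun m => b (v m)) (θ x))) := by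
    intro E
    induction E with
    | tru => intro _ _; simp [Fml.subst, Fml.sat]
    | fls => intro _ _; simp [Fml.subst, Fml.sat]
    | atom p m ts =>
      intro _ hfuns
      have hsub : ∀ i, (ts i).funs ∩ FS = ∅ := by
        intro i
        apply Set.eq_empty_iff_forall_notMem.mpr
        rintro x ⟨hx1, hx2⟩
        exact Set.eq_empty_iff_forall_notMem.mp hfuns x ⟨Set.mem_iUnion.mpr ⟨i, hx1⟩, hx2⟩
      simp only [Fml.subst, Fml.sat]
      simp only [evalT]
      have e3 : (fun i => Tm.eval M' (fun x => hhAux n tl M' d₀ (fun m => b (v m)) (θ x)) (ts i))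
          = fun i => hhAux n tl M' d₀ (fun m => b (v m)) ((ts i).subst θ) :=
        funext (fun i => TL2 (ts i) (hsub i))
      rw [e3]
    | neg E ihE =>
      intro hqf hfuns
      simp only [Fml.subst, Fml.sat]
      rw [ihE hqf hfuns]
    | conj E1 E2 ih1 ih2 =>
      intro hqf hfuns
      have hf1 : E1.funs ∩ FS = ∅ := by
        apply Set.eq_empty_iff_forall_notMem.mpr
        rintro x ⟨hx1, hx2⟩
        exact Set.eq_empty_iff_forall_notMem.mp hfuns x ⟨Or.inl hx1, hx2⟩
      have hf2 : E2.funs ∩ FS = ∅ := by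
        apply Set.eq_empty_iff_forall_notMem.mpr
        rintro x ⟨hx1, hx2⟩
        exact Set.eq_empty_iff_forall_notMem.mp hfuns x ⟨Or.inr hx1, hx2⟩
      simp only [Fml.subst, Fml.sat]
      rw [ih1 hqf.1 hf1, ih2 hqf.2 hf2]
    | disj E1 E2 ih1 ih2 =>
      intro hqf hfuns
      have hf1 : E1.funs ∩ FS = ∅ := by
        apply Set.eq_empty_iff_forall_notMem.mpr
        rintro x ⟨hx1, hx2⟩
        exact Set.eq_empty_iff_forall_notMem.mp hfuns x ⟨Or.inl hx1, hx2⟩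
      have hf2 : E2.funs ∩ FS = ∅ := by
        apply Set.eq_empty_iff_forall_notMem.mpr
        rintro x ⟨hx1, hx2⟩
        exact Set.eq_empty_iff_forall_notMem.mp hfuns x ⟨Or.inr hx1, hx2⟩
      simp only [Fml.subst, Fml.sat]
      rw [ih1 hqf.1 hf1, ih2 hqf.2 hf2]
    | all x E ihE => intro hqf; exact hqf.elim
    | exi x E ihE => intro hqf; exact hqf.elim
  exact (FL2 Ge hGeQF hGeFS).mp hGeθT

end CTIF
end
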